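/- Let G be a connected (α,β,w)-DT graph on n vertices ordered so that w(1) ≤ … ≤ w(n), with d_i = |N(i)| and d_i⁺ = |N_i⁺| where N_i⁺ = {j > i : ij ∈ E}. Then the number of triangles in G equals Σ_{i=1}^n C(d_i⁺, 2), and hence the global clustering coefficient equals 3·Σᵢ C(d_i⁺,2) / Σᵢ C(d_i,2). -/

import Mathlib

def IsDTGraph {V : Type*} (G : SimpleGraph V) (α β : ℝ) (w : V → ℝ) : Prop :=
  0 < β ∧ β ≤ α ∧ (∀ i, 0 < w i) ∧
    ∀ i j : V, i ≠ j → (G.Adj i j ↔ α ≤ w i + w j ∧ |w i - w j| ≤ β)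

/-- For a connected DT graph on vertices `1, …, n` ordered by nondecreasing
weight, the number of triangles equals `∑ i, C(dᵢ⁺, 2)`, and hence the global
clustering coefficient equals `3·∑ᵢ C(dᵢ⁺,2) / ∑ᵢ C(dᵢ,2)`. -/
theorem stmt_18 {n : ℕ} (G : SimpleGraph (Fin n)) [DecidableRel G.Adj]
    (α β : ℝ) (w : Fin n → ℝ) (hDT : IsDTGraph G α β w) (hconn : G.Connected)
    (hmono : Monotone w)
    (d dplus : Fin n → ℕ)
    (hd : ∀ i, d i = (G.neighborFinset i).card)
    (hdplus : ∀ i, dplus i = (Finset.univ.filter (fun j => i < j ∧ G.Adj i j)).card) :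
    (G.cliqueFinset 3).card = ∑ i : Fin n, Nat.choose (dplus i) 2 ∧
      (3 * ((G.cliqueFinset 3).card : ℚ)) / (∑ i : Fin n, (Nat.choose (d i) 2 : ℚ)) =
        (3 * ∑ i : Fin n, (Nat.choose (dplus i) 2 : ℚ)) /
          (∑ i : Fin n, (Nat.choose (d i) 2 : ℚ)) := by
  obtain ⟨hβ, hβα, hw, hadj⟩ := hDT
  -- upper neighborhoods are cliques
  have key0 : ∀ i j k : Fin n, i < j → j < k → G.Adj i j → G.Adj i k → G.Adj j k := by
    intro i j k hij hjk hj hk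
    have hwij := hmono hij.le
    have hwjk := hmono hjk.le
    have h1 := (hadj i k (ne_of_lt (hij.trans hjk))).mp hk
    rw [hadj j k (ne_of_lt hjk)]
    rw [abs_le] at *
    exact ⟨by linarith [h1.1], by linarith [h1.2.1, h1.2.2], by linarith [h1.2.1, h1.2.2]⟩
  have key : ∀ i j k : Fin n, i < j → i < k → j ≠ k → G.Adj i j → G.Adj i k → G.Adj j k := by
    intro i j k hij hik hjk hj hk
    rcases lt_or_gt_of_ne hjk with h | h
    · exact key0 i j k hij h hj hk
    · exact (key0 i k j hik h hk hj).symm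
  set S : Fin n → Finset (Fin n) :=
    fun i => Finset.univ.filter (fun j => i < j ∧ G.Adj i j) with hS
  have main : G.cliqueFinset 3
      = Finset.univ.biUnion (fun i => ((S i).powersetCard 2).image (insert i)) := by
    ext t
    simp only [Finset.mem_biUnion, Finset.mem_image, Finset.mem_powersetCard,
      SimpleGraph.mem_cliqueFinset_iff, SimpleGraph.isNClique_iff, Finset.mem_univ,
      true_and]
    constructor
    · rintro ⟨hcl, hc3⟩
      have hne : t.Nonempty := Finset.card_pos.mp (by omega)
      refine ⟨t.min' hne, t.erase (t.min' hne), ⟨?_, ?_⟩, ?_⟩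
      · intro j hj
        have hjt := Finset.mem_of_mem_erase hj
        have hjne := Finset.ne_of_mem_erase hj
        have hlt : t.min' hne < j := lt_of_le_of_ne (t.min'_le j hjt) (Ne.symm hjne)
        simp only [hS, Finset.mem_filter, Finset.mem_univ, true_and]
        exact ⟨hlt, hcl (t.min'_mem hne) hjt hjne.symm⟩
      · rw [Finset.card_erase_of_mem (t.min'_mem hne), hc3]
      · exact Finset.insert_erase (t.min'_mem hne)
    · rintro ⟨i, p, ⟨hp, hp2⟩, rfl⟩
      have hip : ∀ j ∈ p, i < j ∧ G.Adj i j := by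
        intro j hj
        have := hp hj
        simpa [hS] using this
      have hin : i ∉ p := fun h => lt_irrefl i (hip i h).1
      constructor
      · intro a ha b hb hab
        rw [Finset.coe_insert, Set.mem_insert_iff] at ha hb
        rcases ha with rfl | ha <;> rcases hb with rfl | hb
        · exact absurd rfl hab
        · exact (hip b hb).2
        · exact ((hip a ha).2).symm
        · exact key i a b (hip a ha).1 (hip b hb).1 hab (hip a ha).2 (hip b hb).2
      · rw [Finset.card_insert_of_notMem hin, hp2]
  have hmin : ∀ (i : Fin n) (p : Finset (Fin n)), p ∈ (S i).powersetCard 2 →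
      ∀ j ∈ p, i < j := by
    intro i p hp j hj
    rw [Finset.mem_powersetCard] at hp
    have := hp.1 hj
    simp only [hS, Finset.mem_filter] at this
    exact this.2.1
  have hdisj : ((Finset.univ : Finset (Fin n)) : Set (Fin n)).PairwiseDisjoint
      (fun i => ((S i).powersetCard 2).image (insert i)) := by
    intro i _ i' _ hii'
    simp only [Function.onFun]
    rw [Finset.disjoint_left]
    rintro t ht ht'
    simp only [Finset.mem_image] at ht ht'
    obtain ⟨p, hp, rfl⟩ := ht
    obtain ⟨p', hp', heq⟩ := ht'
    have h1 : i' ∈ insert i p := by rw [← heq]; exact Finset.mem_insert_self _ _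
    have h2 : i ∈ insert i' p' := by rw [heq]; exact Finset.mem_insert_self _ _
    rcases Finset.mem_insert.mp h1 with rfl | h1
    · exact hii' rfl
    rcases Finset.mem_insert.mp h2 with rfl | h2
    · exact hii' rfl
    exact absurd (hmin i p hp i' h1) (asymm (hmin i' p' hp' i h2))
  have h1 : (G.cliqueFinset 3).card = ∑ i : Fin n, Nat.choose (dplus i) 2 := by
    rw [main, Finset.card_biUnion (fun i _ i' _ h => hdisj (Finset.mem_coe.mpr (Finset.mem_univ i)) (Finset.mem_coe.mpr (Finset.mem_univ i')) h)]
    refine Finset.sum_congr rfl fun i _ => ?_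
    rw [Finset.card_image_of_injOn, Finset.card_powersetCard, hdplus i]
    intro p hp p' hp' heq
    have hi : i ∉ p := fun h => lt_irrefl i (hmin i p hp i h)
    have hi' : i ∉ p' := fun h => lt_irrefl i (hmin i p' hp' i h)
    rw [← Finset.erase_insert hi, heq, Finset.erase_insert hi']
  refine ⟨h1, ?_⟩
  rw [h1]
  push_cast
  ring
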